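/- Let G be a directed graph, s, t vertices and k ∈ ℕ. Let V_{k-1} = {u : sd(s,u) ≤ k−1 and sd(u,t) ≤ k−1 and sd(s,u)+sd(u,t) ≤ k} ∪ {s,t}. Then the subgraph induced by V_{k-1} contains every simple s-t path of G of length at most k. (In other words, (k−1)-hop bidirectional BFS suffices for the preprocessing.) -/
import Mathlib


variable {V : Type*}

/-- `p` is a (nonempty) directed path/walk from `s` to `t` in the graph with edge
relation `E`: consecutive vertices are joined by edges, it starts at `s` and ends at `t`. -/
def IsPath (E : V → V → Prop) (s t : V) (p : List V) : Prop :=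
  p.Chain' E ∧ p.head? = some s ∧ p.getLast? = some t

/-- A simple path: a path with no repeated vertices. -/
def IsSimplePath (E : V → V → Prop) (s t : V) (p : List V) : Prop :=
  IsPath E s t p ∧ p.Nodup

/-- The length (number of edges) of a path given as a vertex list. -/
def len (p : List V) : ℕ := p.length - 1

/-- Directed shortest-path distance (number of edges), `⊤` if unreachable. -/
noncomputable def sd (E : V → V → Prop) (u v : V) : ℕ∞ :=
  sInf {n : ℕ∞ | ∃ p : List V, IsPath E u v p ∧ (len p : ℕ∞) = n}

lemma sd_le_of_path (E : V → V → Prop) {u v : V} {q : List V} (h : IsPath E u v q) :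
    sd E u v ≤ (len q : ℕ∞) :=
  sInf_le ⟨q, h, rfl⟩

theorem k_minus_one_hop_bfs_suffices (E : V → V → Prop) (s t : V) (k : ℕ)
    (hst : sd E s t ≤ (k : ℕ∞)) (p : List V)
    (hp : IsSimplePath E s t p) (hlen : len p ≤ k) :
    ∀ v ∈ p,
      (sd E s v ≤ ((k - 1 : ℕ) : ℕ∞) ∧ sd E v t ≤ ((k - 1 : ℕ) : ℕ∞) ∧
        sd E s v + sd E v t ≤ (k : ℕ∞)) ∨ v = s ∨ v = t := by
  intro v hv
  obtain ⟨l, r, rfl⟩ := List.append_of_mem hv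
  obtain ⟨⟨hchain, hhead, hlast⟩, _⟩ := hp
  rcases eq_or_ne l [] with rfl | hl
  · right; left
    simpa [eq_comm] using hhead
  rcases eq_or_ne r [] with rfl | hr
  · right; right
    rw [List.getLast?_append_of_ne_nil l (by simp)] at hlast
    simpa [eq_comm] using hlast
  left
  -- prefix path from s to v
  have hq1 : IsPath E s v (l ++ [v]) := by
    refine ⟨hchain.infix ⟨[], r, by simp⟩, ?_, ?_⟩
    · rw [List.head?_append_of_ne_nil l hl]
      rwa [List.head?_append_of_ne_nil l hl] at hhead
    · simp
  -- suffix path from v to t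
  have hq2 : IsPath E v t (v :: r) := by
    refine ⟨hchain.suffix ⟨l, rfl⟩, rfl, ?_⟩
    rwa [List.getLast?_append_of_ne_nil l (by simp)] at hlast
  have ha : sd E s v ≤ (l.length : ℕ∞) := by
    have := sd_le_of_path E hq1
    simpa [len] using this
  have hb : sd E v t ≤ (r.length : ℕ∞) := by
    have := sd_le_of_path E hq2
    simpa [len] using this
  have hab : l.length + r.length ≤ k := by
    simpa [len, List.length_append, Nat.add_comm, Nat.add_left_comm] using hlen
  have hl1 : 1 ≤ l.length := List.length_pos_iff.mpr hl
  have hr1 : 1 ≤ r.length := List.length_pos_iff.mpr hr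
  refine ⟨ha.trans ?_, hb.trans ?_, ?_⟩
  · exact_mod_cast Nat.cast_le.mpr (by omega : l.length ≤ k - 1)
  · exact_mod_cast Nat.cast_le.mpr (by omega : r.length ≤ k - 1)
  · calc sd E s v + sd E v t ≤ (l.length : ℕ∞) + r.length := add_le_add ha hb
      _ ≤ (k : ℕ∞) := by exact_mod_cast hab
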